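/- Let (𝒳, ω) be a left Frobenius pair in an abelian category 𝒞. Then (ω, 𝒳^{⊥1}) is a complete cotorsion pair cut along ω^∧. Moreover, (ω, 𝒳^{⊥1}) is a complete left cotorsion pair cut along 𝒳^∧ if and only if 𝒳^∧ = ω^∧. -/

import Mathlib

namespace CutPaper

open CategoryTheory CategoryTheory.Limits CategoryTheory.Abelian ZeroObject

universe w v u

variable {C : Type u} [Category.{v} C] [Abelian C]

/-- There exists a short exact sequence `0 ⟶ X ⟶ Y ⟶ Z ⟶ 0` in `C`. -/
def SES (X Y Z : C) : Prop :=
  ∃ (f : X ⟶ Y) (g : Y ⟶ Z) (zero : f ≫ g = 0),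
    (ShortComplex.mk f g zero).ShortExact

/-- A class of objects is closed under isomorphisms. -/
def ClosedUnderIso (A : Set C) : Prop :=
  ∀ ⦃X Y : C⦄, (X ≅ Y) → X ∈ A → Y ∈ A

/-- A class of objects is closed under direct summands (i.e. retracts). -/
def ClosedUnderDirectSummands (A : Set C) : Prop :=
  ∀ ⦃X Y : C⦄ (i : X ⟶ Y) (r : Y ⟶ X), i ≫ r = 𝟙 X → Y ∈ A → X ∈ A

/-- A class of objects is closed under extensions. -/
def ClosedUnderExtensions (A : Set C) : Prop :=
  ∀ ⦃X Y Z : C⦄, SES X Y Z → X ∈ A → Z ∈ A → Y ∈ A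

/-- A class of objects is closed under kernels of epimorphisms between its objects. -/
def ClosedUnderEpiKernels (A : Set C) : Prop :=
  ∀ ⦃X Y Z : C⦄, SES X Y Z → Y ∈ A → Z ∈ A → X ∈ A

/-- A class of objects is closed under cokernels of monomorphisms between its objects. -/
def ClosedUnderMonoCokernels (A : Set C) : Prop :=
  ∀ ⦃X Y Z : C⦄, SES X Y Z → X ∈ A → Y ∈ A → Z ∈ A

/-- A class is left thick if it is closed under extensions, epi-kernels and direct summands. -/
def LeftThick (A : Set C) : Prop :=
  ClosedUnderExtensions A ∧ ClosedUnderEpiKernels A ∧ ClosedUnderDirectSummands A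

/-- A class is right thick if closed under extensions, mono-cokernels and direct summands. -/
def RightThick (A : Set C) : Prop :=
  ClosedUnderExtensions A ∧ ClosedUnderMonoCokernels A ∧ ClosedUnderDirectSummands A

/-- A class is thick if it is both left and right thick. -/
def IsThickClass (A : Set C) : Prop := LeftThick A ∧ RightThick A

/-- The smallest thick class containing `F`. -/
def ThickClosure (F : Set C) : Set C := ⋂₀ {T : Set C | IsThickClass T ∧ F ⊆ T}

/-- A class is closed under finite (binary) coproducts. -/
def ClosedUnderBinaryCoproducts (A : Set C) : Prop :=
  ∀ ⦃X Y : C⦄, X ∈ A → Y ∈ A → (X ⊞ Y) ∈ A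

/-- `ω` is a relative cogenerator in `A`: `ω ⊆ A` and every `X ∈ A` fits in a short
exact sequence `0 → X → W → X' → 0` with `W ∈ ω`, `X' ∈ A`. -/
def IsRelativeCogenerator (ω A : Set C) : Prop :=
  ω ⊆ A ∧ ∀ X ∈ A, ∃ W X', W ∈ ω ∧ X' ∈ A ∧ SES X W X'

/-- `ν` is a relative generator in `ω`: `ν ⊆ ω` and every `W ∈ ω` fits in a short
exact sequence `0 → W' → V → W → 0` with `V ∈ ν`, `W' ∈ ω`. -/
def IsRelativeGenerator (ν ω : Set C) : Prop :=
  ν ⊆ ω ∧ ∀ W ∈ ω, ∃ V W', V ∈ ν ∧ W' ∈ ω ∧ SES W' V W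

/-- The objects of `B`-resolution dimension at most `n` (the class `B^∧_n`). -/
def ResDimLE (B : Set C) : ℕ → Set C
  | 0 => {X | ∃ B₀ ∈ B, Nonempty (X ≅ B₀)}
  | (n + 1) => ResDimLE B n ∪ {X | ∃ K B₀, K ∈ ResDimLE B n ∧ B₀ ∈ B ∧ SES K B₀ X}

/-- The class `B^∧` of objects of finite `B`-resolution dimension. -/
def ResFin (B : Set C) : Set C := {X | ∃ n, X ∈ ResDimLE B n}

/-- The `B`-resolution dimension of an object, valued in `ℕ∞`. -/
noncomputable def resDim (B : Set C) (X : C) : ℕ∞ :=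
  sInf ((fun n : ℕ => (n : ℕ∞)) '' {n | X ∈ ResDimLE B n})

/-- The objects of `B`-coresolution dimension at most `n` (the class `B^∨_n`). -/
def CoresDimLE (B : Set C) : ℕ → Set C
  | 0 => {X | ∃ B₀ ∈ B, Nonempty (X ≅ B₀)}
  | (n + 1) => CoresDimLE B n ∪ {X | ∃ B₀ K, B₀ ∈ B ∧ K ∈ CoresDimLE B n ∧ SES X B₀ K}

/-- The `B`-coresolution dimension of an object, valued in `ℕ∞`. -/
noncomputable def coresDim (B : Set C) (X : C) : ℕ∞ :=
  sInf ((fun n : ℕ => (n : ℕ∞)) '' {n | X ∈ CoresDimLE B n})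

/-- The class of `(𝒳, 𝒴)`-Gorenstein projective objects: 0-th cycles of exact,
`Hom(-, 𝒴)`-acyclic complexes with components in `𝒳`. -/
def GorensteinProj (𝒳 𝒴 : Set C) : Set C :=
  {M | ∃ K : ChainComplex C ℤ,
    (∀ m : ℤ, K.X m ∈ 𝒳) ∧
    (∀ m : ℤ, K.ExactAt m) ∧
    (∀ Y₀ ∈ 𝒴, ∀ m : ℤ, ∀ f : K.X m ⟶ Y₀, K.d (m + 1) m ≫ f = 0 →
      ∃ g : K.X (m - 1) ⟶ Y₀, K.d m (m - 1) ≫ g = f) ∧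
    Nonempty (M ≅ K.cycles 0)}

section HasExt

variable [HasExt.{w} C]

/-- `Ext¹(A, B) = 0`. -/
def ext1Zero (A B : C) : Prop := Subsingleton (Abelian.Ext.{w} A B 1)

/-- `Extⁱ(A, B) = 0` for all `i ≥ 1`. -/
def extVanish (A B : C) : Prop := ∀ i : ℕ, 1 ≤ i → Subsingleton (Abelian.Ext.{w} A B i)

/-- `Extⁱ(X, Y) = 0` for all `i ≥ 1`, `X ∈ 𝒜`, `Y ∈ ℬ`. -/
def ExtPairVanish (𝒜 ℬ : Set C) : Prop := ∀ X ∈ 𝒜, ∀ Y ∈ ℬ, extVanish.{w} X Y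

/-- The right `Ext¹`-orthogonal complement `𝒜^{⊥1}`. -/
def rightPerp1 (𝒜 : Set C) : Set C := {N | ∀ X ∈ 𝒜, ext1Zero.{w} X N}

/-- The total right orthogonal complement `𝒜^{⊥}`. -/
def rightPerp (𝒜 : Set C) : Set C := {N | ∀ X ∈ 𝒜, extVanish.{w} X N}

/-- The left `Ext¹`-orthogonal complement `^{⊥1}ℬ`. -/
def leftPerp1 (ℬ : Set C) : Set C := {M | ∀ Y ∈ ℬ, ext1Zero.{w} M Y}

/-- `(𝒜, ℬ)` is a left cotorsion pair cut along `𝒮`. -/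
def LeftCutCotorsion (𝒜 ℬ 𝒮 : Set C) : Prop :=
  ClosedUnderDirectSummands 𝒜 ∧ 𝒜 ∩ 𝒮 = leftPerp1.{w} ℬ ∩ 𝒮

/-- `(𝒜, ℬ)` is a complete left cotorsion pair cut along `𝒮`. -/
def CompleteLeftCutCotorsion (𝒜 ℬ 𝒮 : Set C) : Prop :=
  LeftCutCotorsion.{w} 𝒜 ℬ 𝒮 ∧ ∀ S ∈ 𝒮, ∃ B₀ A₀, B₀ ∈ ℬ ∧ A₀ ∈ 𝒜 ∧ SES B₀ A₀ S

/-- `(𝒜, ℬ)` is a right cotorsion pair cut along `𝒮`. -/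
def RightCutCotorsion (𝒜 ℬ 𝒮 : Set C) : Prop :=
  ClosedUnderDirectSummands ℬ ∧ ℬ ∩ 𝒮 = rightPerp1.{w} 𝒜 ∩ 𝒮

/-- `(𝒜, ℬ)` is a complete right cotorsion pair cut along `𝒮`. -/
def CompleteRightCutCotorsion (𝒜 ℬ 𝒮 : Set C) : Prop :=
  RightCutCotorsion.{w} 𝒜 ℬ 𝒮 ∧ ∀ S ∈ 𝒮, ∃ B₀ A₀, B₀ ∈ ℬ ∧ A₀ ∈ 𝒜 ∧ SES S B₀ A₀

/-- `(𝒜, ℬ)` is a complete cotorsion pair cut along `𝒮`. -/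
def CompleteCutCotorsion (𝒜 ℬ 𝒮 : Set C) : Prop :=
  CompleteLeftCutCotorsion.{w} 𝒜 ℬ 𝒮 ∧ CompleteRightCutCotorsion.{w} 𝒜 ℬ 𝒮

/-- `(𝒜, ℬ)` is a complete left cotorsion pair in `C`. -/
def CompleteLeftCotorsionPair (𝒜 ℬ : Set C) : Prop :=
  𝒜 = leftPerp1.{w} ℬ ∧ ∀ X : C, ∃ B₀ A₀, B₀ ∈ ℬ ∧ A₀ ∈ 𝒜 ∧ SES B₀ A₀ X

/-- `(𝒜, ℬ)` is a complete cotorsion pair in `C`. -/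
def CompleteCotorsionPair (𝒜 ℬ : Set C) : Prop :=
  CompleteLeftCotorsionPair.{w} 𝒜 ℬ ∧ ℬ = rightPerp1.{w} 𝒜 ∧
    ∀ X : C, ∃ B₀ A₀, B₀ ∈ ℬ ∧ A₀ ∈ 𝒜 ∧ SES X B₀ A₀

/-- `(𝒳, ω)` is a left Frobenius pair in `C`. -/
def LeftFrobenius (𝒳 ω : Set C) : Prop :=
  LeftThick 𝒳 ∧ ClosedUnderDirectSummands ω ∧
    ExtPairVanish.{w} 𝒳 ω ∧ IsRelativeCogenerator ω 𝒳

/-- `(𝒳, ω)` is a left Frobenius pair cut along `𝒮`. -/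
def LeftFrobeniusCutAlong (𝒳 ω 𝒮 : Set C) : Prop :=
  LeftThick 𝒳 ∧
  LeftFrobenius.{w} (𝒳 ∩ 𝒮) (ω ∩ 𝒮) ∧
  (ExtPairVanish.{w} (ω ∩ 𝒮) ω ∧ IsRelativeGenerator (ω ∩ 𝒮) ω) ∧
  (ClosedUnderExtensions ω ∧ ClosedUnderDirectSummands ω)

/-- `(𝒜, ℬ)` is a left weak AB context in `C`. -/
def LeftWeakABContext (𝒜 ℬ : Set C) : Prop :=
  LeftFrobenius.{w} 𝒜 (𝒜 ∩ ℬ) ∧ RightThick ℬ ∧ ℬ ⊆ ResFin 𝒜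

/-- `(𝒜, ℬ)` is a left weak AB context cut along `𝒮`. -/
def LeftWeakABContextCutAlong (𝒜 ℬ 𝒮 : Set C) : Prop :=
  LeftFrobeniusCutAlong.{w} 𝒜 (𝒜 ∩ ℬ) 𝒮 ∧ RightThick (ℬ ∩ 𝒮) ∧
    ℬ ∩ 𝒮 ⊆ ResFin (𝒜 ∩ 𝒮)

/-- `(𝒳, 𝒴)` is a GP-admissible pair. -/
def GPAdmissible (𝒳 𝒴 : Set C) : Prop :=
  ExtPairVanish.{w} 𝒳 𝒴 ∧
  (∀ M : C, ∃ X₀, X₀ ∈ 𝒳 ∧ ∃ p : X₀ ⟶ M, Epi p) ∧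
  ClosedUnderBinaryCoproducts 𝒳 ∧ ClosedUnderBinaryCoproducts 𝒴 ∧
  ClosedUnderExtensions 𝒳 ∧
  IsRelativeCogenerator (𝒳 ∩ 𝒴) 𝒳

/-- The class `ℰ_l(𝒜, ℬ)` of objects admitting a suitable left approximation. -/
def EClassLeft (𝒜 ℬ : Set C) : Set C :=
  {X | ∃ B₀ A₀, B₀ ∈ ℬ ∧ A₀ ∈ 𝒜 ∧ SES B₀ A₀ X}

/-- The maximal left cotorsion cut `𝕊_l(𝒜, ℬ)`. -/
def MaxLeftCut (𝒜 ℬ : Set C) : Set C :=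
  ⋃₀ {𝒮 | CompleteLeftCutCotorsion.{w} 𝒜 ℬ 𝒮}

/-- `pd(M) ≤ n`, via vanishing of `Ext` in degrees `> n`. -/
def pdLE (M : C) (n : ℕ) : Prop :=
  ∀ i : ℕ, n < i → ∀ N : C, Subsingleton (Abelian.Ext.{w} M N i)

/-- The projective dimension of an object, valued in `ℕ∞`. -/
noncomputable def pd (M : C) : ℕ∞ :=
  sInf ((fun n : ℕ => (n : ℕ∞)) '' {n | pdLE.{w} M n})

/-- The projective dimension of a class of objects. -/
noncomputable def pdClass (𝒜 : Set C) : ℕ∞ := ⨆ M ∈ 𝒜, pd.{w} M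

/-- The `𝔓_𝒮`-condition of the second correspondence theorem. -/
def PPair (𝒮 ℱ 𝒢 : Set C) : Prop :=
  CompleteCutCotorsion.{w} ℱ 𝒢 (ThickClosure ℱ) ∧
  ExtPairVanish.{w} ℱ 𝒢 ∧
  IsRelativeGenerator (ℱ ∩ 𝒢 ∩ 𝒮) (ℱ ∩ 𝒢) ∧
  IsRelativeCogenerator (ℱ ∩ 𝒢 ∩ 𝒮) (ℱ ∩ 𝒢)

end HasExt

/-- The class of projective objects of `C`. -/
def ProjClass (C : Type u) [Category.{v} C] : Set C := {P : C | Projective P}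

section HasExt
variable (C) [HasExt.{w} C]

/-- The finitistic dimension of `C`. -/
noncomputable def Findim : ℕ∞ := pdClass.{w} (ResFin (ProjClass C))

end HasExt




section Aux

variable [CategoryTheory.HasExt.{w} C]

noncomputable def singleHomologyIso [HasDerivedCategory C] :
    DerivedCategory.singleFunctor C 0 ⋙ DerivedCategory.homologyFunctor C 0 ≅ 𝟭 C :=
  Functor.isoWhiskerRight ((SingleFunctors.evaluation _ _ 0).mapIso
      (DerivedCategory.singleFunctorsPostcompQIso C)) (DerivedCategory.homologyFunctor C 0)
    ≪≫ Functor.associator _ _ _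
    ≪≫ Functor.isoWhiskerLeft (CochainComplex.singleFunctor C 0)
        (DerivedCategory.homologyFunctorFactors C 0)
    ≪≫ HomologicalComplex.homologyFunctorSingleIso C (ComplexShape.up ℤ) 0

lemma exists_section_of_subsingleton_ext1
    {S : ShortComplex C} (hS : S.ShortExact)
    (h : Subsingleton (Abelian.Ext.{w} S.X₃ S.X₁ 1)) :
    ∃ s : S.X₃ ⟶ S.X₂, s ≫ S.g = 𝟙 S.X₃ := by
  obtain ⟨x₂, hx₂⟩ := Ext.covariant_sequence_exact₃ S.X₃ hS (Ext.mk₀ (𝟙 S.X₃)) rfl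
    (Subsingleton.elim _ _)
  letI := HasDerivedCategory.standard C
  obtain ⟨φ, hφ⟩ := (ShiftedHom.homEquiv ((0 : ℕ) : ℤ) (by simp)).surjective x₂.hom
  have h1 : φ ≫ (DerivedCategory.singleFunctor C 0).map S.g
      = 𝟙 ((DerivedCategory.singleFunctor C 0).obj S.X₃) := by
    have h2 := congrArg Ext.homEquiv hx₂
    rw [show (Ext.homEquiv (x₂.comp (Ext.mk₀ S.g) (add_zero 0))) =
      (x₂.comp (Ext.mk₀ S.g) (add_zero 0)).hom from rfl] at h2
    rw [show (Ext.homEquiv (Ext.mk₀ (𝟙 S.X₃))) = (Ext.mk₀ (𝟙 S.X₃)).hom from rfl] at h2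
    rw [Ext.comp_hom, Ext.mk₀_hom, ← hφ, ShiftedHom.homEquiv_apply,
      ShiftedHom.mk₀_comp_mk₀, Ext.mk₀_hom] at h2
    have h3 := (ShiftedHom.homEquiv ((0:ℕ) : ℤ) (by simp)).injective
      (a₁ := φ ≫ (DerivedCategory.singleFunctor C 0).map S.g)
      (a₂ := (DerivedCategory.singleFunctor C 0).map (𝟙 S.X₃)) ?_
    · rw [h3, CategoryTheory.Functor.map_id]
    · simpa [ShiftedHom.homEquiv_apply] using h2
  refine ⟨(singleHomologyIso (C := C)).inv.app S.X₃ ≫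
    (DerivedCategory.homologyFunctor C 0).map φ ≫ (singleHomologyIso (C := C)).hom.app S.X₂, ?_⟩
  have hnat := (singleHomologyIso (C := C)).hom.naturality S.g
  dsimp at hnat
  rw [Category.assoc, Category.assoc, ← hnat, ← Functor.comp_map,
    ← Category.assoc ((DerivedCategory.homologyFunctor C 0).map φ)]
  rw [show (DerivedCategory.homologyFunctor C 0).map φ ≫
      (DerivedCategory.singleFunctor C 0 ⋙ DerivedCategory.homologyFunctor C 0).map S.g
      = (DerivedCategory.homologyFunctor C 0).map
          (φ ≫ (DerivedCategory.singleFunctor C 0).map S.g)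
      from by simp [Functor.comp_map]]
  rw [h1, CategoryTheory.Functor.map_id]
  simp

lemma ext_subsingleton_of_retract {X Y Y' : C} {n : ℕ} (i : Y ⟶ Y') (r : Y' ⟶ Y)
    (hir : i ≫ r = 𝟙 Y) (h : Subsingleton (Abelian.Ext.{w} X Y' n)) :
    Subsingleton (Abelian.Ext.{w} X Y n) := by
  constructor
  intro α β
  have key : ∀ γ : Abelian.Ext.{w} X Y n,
      γ = (γ.comp (Ext.mk₀ i) (add_zero n)).comp (Ext.mk₀ r) (add_zero n) := by
    intro γ
    rw [Ext.comp_assoc_of_third_deg_zero, Ext.mk₀_comp_mk₀, hir, Ext.comp_mk₀_id]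
  rw [key α, key β, Subsingleton.elim (α.comp (Ext.mk₀ i) (add_zero n))
    (β.comp (Ext.mk₀ i) (add_zero n))]

lemma ext_subsingleton_zero {X : C} {n : ℕ} :
    Subsingleton (Abelian.Ext.{w} X (0 : C) n) := by
  refine subsingleton_of_forall_eq 0 fun α => ?_
  have : α = α.comp (Ext.mk₀ (𝟙 (0 : C))) (add_zero n) := (Ext.comp_mk₀_id α).symm
  rw [this, Limits.id_zero, Ext.mk₀_zero, Ext.comp_zero]

lemma ext_subsingleton_of_ses {X : C} {S : ShortComplex C} (hS : S.ShortExact) {n : ℕ}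
    (h1 : Subsingleton (Abelian.Ext.{w} X S.X₁ n))
    (h3 : Subsingleton (Abelian.Ext.{w} X S.X₃ n)) :
    Subsingleton (Abelian.Ext.{w} X S.X₂ n) := by
  refine subsingleton_of_forall_eq 0 fun α => ?_
  obtain ⟨x₁, hx₁⟩ := Ext.covariant_sequence_exact₂ X hS α (Subsingleton.elim _ _)
  rw [← hx₁, Subsingleton.elim x₁ 0, Ext.zero_comp]

lemma vanish_resDimLE (𝒳 ω : Set C)
    (hv : ∀ X ∈ 𝒳, ∀ W ∈ ω, ∀ i : ℕ, 1 ≤ i → Subsingleton (Abelian.Ext.{w} X W i)) :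
    ∀ n : ℕ, ∀ N ∈ ResDimLE ω n, ∀ X ∈ 𝒳, ∀ i : ℕ, 1 ≤ i →
      Subsingleton (Abelian.Ext.{w} X N i) := by
  intro n
  induction n with
  | zero =>
    rintro N ⟨W, hW, ⟨e⟩⟩ X hX i hi
    exact ext_subsingleton_of_retract e.hom e.inv e.hom_inv_id (hv X hX W hW i hi)
  | succ n IH =>
    rintro N (hN | ⟨K, W, hK, hW, f, g, w0, hse⟩) X hX i hi
    · exact IH N hN X hX i hi
    · refine subsingleton_of_forall_eq 0 fun α => ?_
      have hK' : Subsingleton (Abelian.Ext.{w} X K (i + 1)) :=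
        IH K hK X hX (i + 1) (by omega)
      obtain ⟨x₂, hx₂⟩ := Ext.covariant_sequence_exact₃ X hse α rfl (Subsingleton.elim _ _)
      have hw : Subsingleton (Abelian.Ext.{w} X W i) := hv X hX W hW i hi
      rw [← hx₂, @Subsingleton.elim _ hw x₂ 0, Ext.zero_comp]

lemma resDimLE_mono {ω 𝒳 : Set C} (hsub : ω ⊆ 𝒳) :
    ∀ n : ℕ, ResDimLE ω n ⊆ ResDimLE 𝒳 n := by
  intro n
  induction n with
  | zero => rintro N ⟨W, hW, he⟩; exact ⟨W, hsub hW, he⟩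
  | succ n IH =>
    rintro N (hN | ⟨K, W, hK, hW, hses⟩)
    · exact Or.inl (IH hN)
    · exact Or.inr ⟨K, W, IH hK, hsub hW, hses⟩

lemma mem_resDimLE_zero {ω : Set C} {W : C} (hW : W ∈ ω) : W ∈ ResDimLE ω 0 :=
  ⟨W, hW, ⟨Iso.refl W⟩⟩

lemma nonempty_of_resDimLE {ω : Set C} :
    ∀ n : ℕ, ∀ N ∈ ResDimLE ω n, ∃ W, W ∈ ω := by
  intro n
  induction n with
  | zero => rintro N ⟨W, hW, -⟩; exact ⟨W, hW⟩
  | succ n IH =>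
    rintro N (hN | ⟨K, W, hK, hW, -⟩)
    · exact IH N hN
    · exact ⟨W, hW⟩

/-- The split short exact sequence `0 → X → X ⊞ W → W → 0`. -/
lemma ses_biprod (X W : C) : SES X (X ⊞ W) W := by
  refine ⟨biprod.inl, biprod.snd, biprod.inl_snd, ?_⟩
  exact ShortComplex.Splitting.shortExact
    { r := biprod.fst
      s := biprod.inr
      f_r := by simp
      s_g := by simp
      id := by simp [biprod.total] }

/-- The short exact sequence `0 → 0 → S → S → 0`. -/
lemma ses_zero (S : C) : SES (0 : C) S S := by
  refine ⟨0, 𝟙 S, by simp, ?_⟩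
  exact ShortComplex.Splitting.shortExact
    { r := 0
      s := 𝟙 S
      f_r := by simp [Limits.id_zero]
      s_g := by simp
      id := by simp }


end Aux

/-- Proposition 2.3 (2),(3). If `(𝒳, ω)` is a left Frobenius pair, then
`(ω, 𝒳^{⊥1})` is a complete cotorsion pair cut along `ω^∧`; and `(ω, 𝒳^{⊥1})` is a complete
left cotorsion pair cut along `𝒳^∧` iff `𝒳^∧ = ω^∧`. -/
theorem leftFrobenius_omega_rightPerp1_cut
    {C : Type u} [CategoryTheory.Category.{v} C] [CategoryTheory.Abelian C]
    [CategoryTheory.HasExt.{w} C]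
    (𝒳 ω : Set C) (h : LeftFrobenius.{w} 𝒳 ω) :
    CompleteCutCotorsion.{w} ω (rightPerp1.{w} 𝒳) (ResFin ω) ∧
    (CompleteLeftCutCotorsion.{w} ω (rightPerp1.{w} 𝒳) (ResFin 𝒳) ↔ ResFin 𝒳 = ResFin ω) := by
  obtain ⟨hthick, hωsum, hvan, hωsub, -⟩ := h
  have hv : ∀ X ∈ 𝒳, ∀ W ∈ ω, ∀ i : ℕ, 1 ≤ i → Subsingleton (Abelian.Ext.{w} X W i) :=
    fun X hX W hW i hi => hvan X hX W hW i hi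
  have KV : ∀ N ∈ ResFin ω, ∀ X ∈ 𝒳, ∀ i : ℕ, 1 ≤ i →
      Subsingleton (Abelian.Ext.{w} X N i) := by
    rintro N ⟨n, hN⟩ X hX i hi
    exact vanish_resDimLE 𝒳 ω hv n N hN X hX i hi
  have key : ∀ n : ℕ, ∀ M ∈ ResDimLE ω n,
      M ∈ leftPerp1.{w} (rightPerp1.{w} 𝒳) → M ∈ ω := by
    intro n
    induction n with
    | zero =>
      rintro M ⟨W, hW, ⟨e⟩⟩ -
      exact hωsum e.hom e.inv e.hom_inv_id hW
    | succ n IH =>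
      rintro M (hM | ⟨K, W, hK, hW, f, g, w0, hse⟩) hMperp
      · exact IH M hM hMperp
      · have hKperp : K ∈ rightPerp1.{w} 𝒳 := fun X hX =>
          vanish_resDimLE 𝒳 ω hv n K hK X hX 1 le_rfl
        obtain ⟨s, hs⟩ := exists_section_of_subsingleton_ext1 hse (hMperp K hKperp)
        exact hωsum s g hs hW
  have perp_eq : ω ∩ ResFin ω = leftPerp1.{w} (rightPerp1.{w} 𝒳) ∩ ResFin ω := by
    ext M
    constructor
    · rintro ⟨hMω, hM⟩
      exact ⟨fun Y hY => hY M (hωsub hMω), hM⟩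
    · rintro ⟨hMperp, n, hMn⟩
      exact ⟨key n M hMn hMperp, ⟨n, hMn⟩⟩
  have left_complete_aux : ∀ n : ℕ, ∀ S' ∈ ResDimLE ω n,
      ∃ B₀ A₀, B₀ ∈ rightPerp1.{w} 𝒳 ∧ A₀ ∈ ω ∧ SES B₀ A₀ S' := by
    intro n
    induction n with
    | zero =>
      rintro S' ⟨W, hW, ⟨e⟩⟩
      exact ⟨0, S', fun X hX => ext_subsingleton_zero,
        hωsum e.hom e.inv e.hom_inv_id hW, ses_zero S'⟩
    | succ n IH =>
      rintro S' (hS | ⟨K, W, hK, hW, hses⟩)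
      · exact IH S' hS
      · exact ⟨K, W, fun X hX => vanish_resDimLE 𝒳 ω hv n K hK X hX 1 le_rfl, hW, hses⟩
  have left_complete : ∀ S' ∈ ResFin ω,
      ∃ B₀ A₀, B₀ ∈ rightPerp1.{w} 𝒳 ∧ A₀ ∈ ω ∧ SES B₀ A₀ S' := by
    rintro S' ⟨n, hS⟩
    exact left_complete_aux n S' hS
  have right_summands : ClosedUnderDirectSummands (rightPerp1.{w} 𝒳) := by
    intro N N' i r hir hN' X hX
    exact ext_subsingleton_of_retract i r hir (hN' X hX)
  have right_eq : rightPerp1.{w} 𝒳 ∩ ResFin ω = rightPerp1.{w} ω ∩ ResFin ω := by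
    ext N
    constructor
    · rintro ⟨hN, hNf⟩
      exact ⟨fun W hW => hN W (hωsub hW), hNf⟩
    · rintro ⟨-, hNf⟩
      exact ⟨fun X hX => KV N hNf X hX 1 le_rfl, hNf⟩
  have right_complete : ∀ S' ∈ ResFin ω,
      ∃ B₀ A₀, B₀ ∈ rightPerp1.{w} 𝒳 ∧ A₀ ∈ ω ∧ SES S' B₀ A₀ := by
    rintro S' ⟨n, hS⟩
    obtain ⟨W, hW⟩ := nonempty_of_resDimLE n S' hS
    refine ⟨S' ⊞ W, W, ?_, hW, ses_biprod S' W⟩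
    intro X hX
    have h1 : Subsingleton (Abelian.Ext.{w} X S' 1) := KV S' ⟨n, hS⟩ X hX 1 le_rfl
    have h3 : Subsingleton (Abelian.Ext.{w} X W 1) := hv X hX W hW 1 le_rfl
    obtain ⟨f, g, w0, hse⟩ := ses_biprod S' W
    exact ext_subsingleton_of_ses hse h1 h3
  have mono : ResFin ω ⊆ ResFin 𝒳 := by
    rintro N ⟨n, hN⟩
    exact ⟨n, resDimLE_mono hωsub n hN⟩
  refine ⟨⟨⟨⟨hωsum, perp_eq⟩, left_complete⟩,
    ⟨⟨right_summands, right_eq⟩, right_complete⟩⟩, ?_, ?_⟩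
  · rintro ⟨⟨-, hcut⟩, -⟩
    have h𝒳ω : 𝒳 ⊆ ω := by
      intro X hX
      have hmem : X ∈ leftPerp1.{w} (rightPerp1.{w} 𝒳) ∩ ResFin 𝒳 :=
        ⟨fun Y hY => hY X hX, ⟨0, mem_resDimLE_zero hX⟩⟩
      rw [← hcut] at hmem
      exact hmem.1
    have h𝒳ω' : 𝒳 = ω := Set.Subset.antisymm h𝒳ω hωsub
    rw [h𝒳ω']
  · intro heq
    rw [heq]
    exact ⟨⟨hωsum, perp_eq⟩, left_complete⟩


end CutPaper
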